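/- For all m, n ≥ 1, the product F₁F₂⋯Fₙ of the first n Fibonacci numbers divides the product F_{m+1}F_{m+2}⋯F_{m+n} of any n consecutive Fibonacci numbers. -/

import Mathlib

lemma fib_prod_shift (m n : ℕ) :
    ∏ i ∈ Finset.Icc 1 (n + 1), Nat.fib (m + i) =
      Nat.fib (m + 1) * ∏ i ∈ Finset.Icc 1 n, Nat.fib (m + 1 + i) := by
  induction n with
  | zero => simp
  | succ k ih =>
    conv_lhs => rw [Finset.prod_Icc_succ_top (show 1 ≤ k + 1 + 1 by omega)]
    conv_rhs => rw [Finset.prod_Icc_succ_top (show 1 ≤ k + 1 by omega)]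
    rw [ih, show m + (k + 1 + 1) = m + 1 + (k + 1) from by ring]
    ring

lemma fib_prod_dvd_aux : ∀ m n : ℕ,
    (∏ i ∈ Finset.Icc 1 n, Nat.fib i) ∣ ∏ i ∈ Finset.Icc 1 n, Nat.fib (m + i) := by
  intro m
  induction m with
  | zero => intro n; simp
  | succ m ihm =>
    intro n
    induction n with
    | zero => simp
    | succ n ihn =>
      rw [Finset.prod_Icc_succ_top (by omega : 1 ≤ n + 1),
          Finset.prod_Icc_succ_top (by omega : 1 ≤ n + 1),
          show m + 1 + (n + 1) = m + (n + 1) + 1 from by ring,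
          Nat.fib_add, mul_add]
      apply dvd_add
      · -- P * (fib m * fib (n+1))
        have h1 : (∏ i ∈ Finset.Icc 1 n, Nat.fib i) * Nat.fib (n + 1) ∣
            ((∏ i ∈ Finset.Icc 1 n, Nat.fib (m + 1 + i)) * Nat.fib m) * Nat.fib (n + 1) :=
          mul_dvd_mul (ihn.mul_right _) dvd_rfl
        calc (∏ i ∈ Finset.Icc 1 n, Nat.fib i) * Nat.fib (n + 1)
            ∣ ((∏ i ∈ Finset.Icc 1 n, Nat.fib (m + 1 + i)) * Nat.fib m) * Nat.fib (n + 1) := h1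
          _ = (∏ i ∈ Finset.Icc 1 n, Nat.fib (m + 1 + i)) * (Nat.fib m * Nat.fib (n + 1)) := by
              ring
      · -- P * (fib (m+1) * fib (n+2))
        have h2 : (∏ i ∈ Finset.Icc 1 n, Nat.fib (m + 1 + i)) * (Nat.fib (m + 1) * Nat.fib (n + 1 + 1))
            = Nat.fib (n + 1 + 1) * ∏ i ∈ Finset.Icc 1 (n + 1), Nat.fib (m + i) := by
          rw [fib_prod_shift]; ring
        rw [h2, ← Finset.prod_Icc_succ_top (by omega : 1 ≤ n + 1)]
        exact (ihm (n + 1)).mul_left _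

theorem fib_prod_dvd (m n : ℕ) (hm : 1 ≤ m) (hn : 1 ≤ n) :
    (∏ i ∈ Finset.Icc 1 n, Nat.fib i) ∣ ∏ i ∈ Finset.Icc 1 n, Nat.fib (m + i) :=
  fib_prod_dvd_aux m n
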